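/- arXiv:2512.06349 — 2 statements merged into one kernel-verified Lean document; each statement's English description precedes it below -/
import Mathlib

section
/- Fix a G-measurable square-integrable initial state x₀ and an admissible policy u ∈ U, with trajectory (x_k). Assume E[x_kᵀx_k] > 0 for every k ∈ ℕ and ρ(u; x₀) > 0. Then J(x₀,u) = 2·log ρ(u; x₀). Consequently, if every admissible policy u ∈ U satisfies E[x_kᵀx_k] > 0 for all k and ρ(u; x₀) > 0, then inf_{u∈U} J(x₀,u) = 2·log(inf_{u∈U} ρ(u; x₀)), and a policy minimizes J(x₀,·) over U if and only if it minimizes ρ(·; x₀) over U. -/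
open Matrix MeasureTheory ProbabilityTheory
open scoped ENNReal Classical

noncomputable section

namespace SCS

/-! ### Matrix-analytic definitions -/

/-- Rayleigh-quotient definition of the largest eigenvalue of a symmetric matrix. -/
def lamMax {n : ℕ} (M : Matrix (Fin n) (Fin n) ℝ) : ℝ :=
  ⨆ x : {x : Fin n → ℝ // x ⬝ᵥ x = 1}, x.1 ⬝ᵥ M.mulVec x.1

/-- Rayleigh-quotient definition of the smallest eigenvalue of a symmetric matrix. -/
def lamMin {n : ℕ} (M : Matrix (Fin n) (Fin n) ℝ) : ℝ :=
  ⨅ x : {x : Fin n → ℝ // x ⬝ᵥ x = 1}, x.1 ⬝ᵥ M.mulVec x.1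

/-- Spectral norm (the operator norm induced by the Euclidean norm). -/
def specNorm {p q : ℕ} (M : Matrix (Fin p) (Fin q) ℝ) : ℝ :=
  Real.sqrt (lamMax (Mᵀ * M))

variable {n m : ℕ}

/-- `R(P) = BᵀPB + σ²·B̄ᵀPB̄`. -/
def Rop (σ : ℝ) (B Bbar : Matrix (Fin n) (Fin m) ℝ) (P : Matrix (Fin n) (Fin n) ℝ) :
    Matrix (Fin m) (Fin m) ℝ :=
  Bᵀ * P * B + σ ^ 2 • (Bbarᵀ * P * Bbar)

/-- `S(P) = AᵀPB + σ²·ĀᵀPB̄`. -/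
def Sop (σ : ℝ) (A Abar : Matrix (Fin n) (Fin n) ℝ) (B Bbar : Matrix (Fin n) (Fin m) ℝ)
    (P : Matrix (Fin n) (Fin n) ℝ) : Matrix (Fin n) (Fin m) ℝ :=
  Aᵀ * P * B + σ ^ 2 • (Abarᵀ * P * Bbar)

/-- `Φ(P) = AᵀPA + σ²·ĀᵀPĀ − S(P)·R(P)⁻¹·S(P)ᵀ`. -/
def Phi (σ : ℝ) (A Abar : Matrix (Fin n) (Fin n) ℝ) (B Bbar : Matrix (Fin n) (Fin m) ℝ)
    (P : Matrix (Fin n) (Fin n) ℝ) : Matrix (Fin n) (Fin n) ℝ :=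
  Aᵀ * P * A + σ ^ 2 • (Abarᵀ * P * Abar)
    - Sop σ A Abar B Bbar P * (Rop σ B Bbar P)⁻¹ * (Sop σ A Abar B Bbar P)ᵀ

/-- `K(P) = R(P)⁻¹·S(P)ᵀ`. -/
def Kgain (σ : ℝ) (A Abar : Matrix (Fin n) (Fin n) ℝ) (B Bbar : Matrix (Fin n) (Fin m) ℝ)
    (P : Matrix (Fin n) (Fin n) ℝ) : Matrix (Fin m) (Fin n) ℝ :=
  (Rop σ B Bbar P)⁻¹ * (Sop σ A Abar B Bbar P)ᵀ

/-- `C_A = λ_max(AAᵀ + σ²·ĀĀᵀ)`. -/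
def CA (σ : ℝ) (A Abar : Matrix (Fin n) (Fin n) ℝ) : ℝ :=
  lamMax (A * Aᵀ + σ ^ 2 • (Abar * Abarᵀ))

/-- `δ_τ = (τ/n)/((1−τ)·C_A + τ)`. -/
def deltaTau (σ : ℝ) (A Abar : Matrix (Fin n) (Fin n) ℝ) (τ : ℝ) : ℝ :=
  (τ / (n : ℝ)) / ((1 - τ) * CA σ A Abar + τ)

/-- The regularized normalized operator
`Φ̂_τ(P) = ((1−τ)·Φ(P) + (τ/n)·I) / Tr((1−τ)·Φ(P) + (τ/n)·I)`. -/
def PhiHat (σ : ℝ) (A Abar : Matrix (Fin n) (Fin n) ℝ) (B Bbar : Matrix (Fin n) (Fin m) ℝ)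
    (τ : ℝ) (P : Matrix (Fin n) (Fin n) ℝ) : Matrix (Fin n) (Fin n) ℝ :=
  (Matrix.trace ((1 - τ) • Phi σ A Abar B Bbar P
      + (τ / (n : ℝ)) • (1 : Matrix (Fin n) (Fin n) ℝ)))⁻¹ •
    ((1 - τ) • Phi σ A Abar B Bbar P + (τ / (n : ℝ)) • (1 : Matrix (Fin n) (Fin n) ℝ))

/-- Inverse of the positive-semidefinite square root (junk value `0` off the PSD cone),
so `invSqrt P = P^{−1/2}` for positive definite `P`. -/
def invSqrt {n : ℕ} (P : Matrix (Fin n) (Fin n) ℝ) : Matrix (Fin n) (Fin n) ℝ :=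
  if h : P.PosSemidef then
    ((h.1.eigenvectorUnitary : Matrix (Fin n) (Fin n) ℝ) * diagonal (Real.sqrt ∘ h.1.eigenvalues)
      * (star h.1.eigenvectorUnitary : Matrix (Fin n) (Fin n) ℝ))⁻¹ else 0

/-- `L(P) = λ_min(P^{−1/2}·Φ(P)·P^{−1/2})`. -/
def Lval (σ : ℝ) (A Abar : Matrix (Fin n) (Fin n) ℝ) (B Bbar : Matrix (Fin n) (Fin m) ℝ)
    (P : Matrix (Fin n) (Fin n) ℝ) : ℝ :=
  lamMin (invSqrt P * Phi σ A Abar B Bbar P * invSqrt P)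

/-- `U(P) = λ_max(P^{−1/2}·Φ(P)·P^{−1/2})`. -/
def Uval (σ : ℝ) (A Abar : Matrix (Fin n) (Fin n) ℝ) (B Bbar : Matrix (Fin n) (Fin m) ℝ)
    (P : Matrix (Fin n) (Fin n) ℝ) : ℝ :=
  lamMax (invSqrt P * Phi σ A Abar B Bbar P * invSqrt P)

/-- The trace-normalized slice `S_a = {X symmetric : X ⪰ a·I, Tr X = 1}`. -/
def Slice (a : ℝ) : Set (Matrix (Fin n) (Fin n) ℝ) :=
  {X | X.IsSymm ∧ (X - a • (1 : Matrix (Fin n) (Fin n) ℝ)).PosSemidef ∧ X.trace = 1}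

/-- `α_A = ‖A‖² + σ²·‖Ā‖²` (spectral norms). -/
def alphaA (σ : ℝ) (A Abar : Matrix (Fin n) (Fin n) ℝ) : ℝ :=
  specNorm A ^ 2 + σ ^ 2 * specNorm Abar ^ 2

/-- `α_S = ‖A‖·‖B‖ + σ²·‖Ā‖·‖B̄‖`. -/
def alphaS (σ : ℝ) (A Abar : Matrix (Fin n) (Fin n) ℝ) (B Bbar : Matrix (Fin n) (Fin m) ℝ) : ℝ :=
  specNorm A * specNorm B + σ ^ 2 * specNorm Abar * specNorm Bbar

/-- `α_R = ‖B‖² + σ²·‖B̄‖²`. -/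
def alphaR (σ : ℝ) (B Bbar : Matrix (Fin n) (Fin m) ℝ) : ℝ :=
  specNorm B ^ 2 + σ ^ 2 * specNorm Bbar ^ 2

/-- `c_R(a) = 1/(a·λ_min(R₀))`. -/
def cR (σ : ℝ) (B Bbar : Matrix (Fin n) (Fin m) ℝ) (a : ℝ) : ℝ :=
  1 / (a * lamMin (Bᵀ * B + σ ^ 2 • (Bbarᵀ * Bbar)))

/-- `L_Φ(a) = α_A + 2·α_S²·c_R(a) + α_S²·α_R·c_R(a)²`. -/
def LPhi (σ : ℝ) (A Abar : Matrix (Fin n) (Fin n) ℝ) (B Bbar : Matrix (Fin n) (Fin m) ℝ)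
    (a : ℝ) : ℝ :=
  alphaA σ A Abar + 2 * alphaS σ A Abar B Bbar ^ 2 * cR σ B Bbar a
    + alphaS σ A Abar B Bbar ^ 2 * alphaR σ B Bbar * cR σ B Bbar a ^ 2

/-- `C_Φ(a) = α_A + α_S²·c_R(a)`. -/
def CPhi (σ : ℝ) (A Abar : Matrix (Fin n) (Fin n) ℝ) (B Bbar : Matrix (Fin n) (Fin m) ℝ)
    (a : ℝ) : ℝ :=
  alphaA σ A Abar + alphaS σ A Abar B Bbar ^ 2 * cR σ B Bbar a

/-- The contraction modulus `Λ(τ)`. -/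
def LambdaTau (σ : ℝ) (A Abar : Matrix (Fin n) (Fin n) ℝ) (B Bbar : Matrix (Fin n) (Fin m) ℝ)
    (τ : ℝ) : ℝ :=
  (1 - τ) * LPhi σ A Abar B Bbar (deltaTau σ A Abar τ) / τ
    + (1 - τ) * ((1 - τ) * CPhi σ A Abar B Bbar (deltaTau σ A Abar τ) + τ / (n : ℝ))
        * (n : ℝ) * LPhi σ A Abar B Bbar (deltaTau σ A Abar τ) / τ ^ 2

/-- The directional derivative `DΦ(P)[H]`. -/
def DPhi (σ : ℝ) (A Abar : Matrix (Fin n) (Fin n) ℝ) (B Bbar : Matrix (Fin n) (Fin m) ℝ)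
    (P H : Matrix (Fin n) (Fin n) ℝ) : Matrix (Fin n) (Fin n) ℝ :=
  Aᵀ * H * A + σ ^ 2 • (Abarᵀ * H * Abar)
    - (Aᵀ * H * B + σ ^ 2 • (Abarᵀ * H * Bbar)) * (Rop σ B Bbar P)⁻¹ * (Sop σ A Abar B Bbar P)ᵀ
    - Sop σ A Abar B Bbar P * (Rop σ B Bbar P)⁻¹ * (Bᵀ * H * A + σ ^ 2 • (Bbarᵀ * H * Abar))
    + Sop σ A Abar B Bbar P * (Rop σ B Bbar P)⁻¹ * (Bᵀ * H * B + σ ^ 2 • (Bbarᵀ * H * Bbar))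
        * (Rop σ B Bbar P)⁻¹ * (Sop σ A Abar B Bbar P)ᵀ

/-- `s_τ(P) = Tr((1−τ)·Φ(P) + (τ/n)·I)`. -/
def sTau (σ : ℝ) (A Abar : Matrix (Fin n) (Fin n) ℝ) (B Bbar : Matrix (Fin n) (Fin m) ℝ)
    (τ : ℝ) (P : Matrix (Fin n) (Fin n) ℝ) : ℝ :=
  Matrix.trace ((1 - τ) • Phi σ A Abar B Bbar P + (τ / (n : ℝ)) • (1 : Matrix (Fin n) (Fin n) ℝ))

/-- The directional derivative
`DΦ̂_τ(P)[H] = ((1−τ)/s_τ(P))·(DΦ(P)[H] − Φ̂_τ(P)·Tr(DΦ(P)[H]))`. -/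
def DPhiHat (σ : ℝ) (A Abar : Matrix (Fin n) (Fin n) ℝ) (B Bbar : Matrix (Fin n) (Fin m) ℝ)
    (τ : ℝ) (P H : Matrix (Fin n) (Fin n) ℝ) : Matrix (Fin n) (Fin n) ℝ :=
  ((1 - τ) / sTau σ A Abar B Bbar τ P) •
    (DPhi σ A Abar B Bbar P H
      - Matrix.trace (DPhi σ A Abar B Bbar P H) • PhiHat σ A Abar B Bbar τ P)

/-- The local Lipschitz modulus `Lip(P,τ) = sup{‖DΦ̂_τ(P)[H]‖ : H symmetric, ‖H‖ = 1}`. -/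
def LipMod (σ : ℝ) (A Abar : Matrix (Fin n) (Fin n) ℝ) (B Bbar : Matrix (Fin n) (Fin m) ℝ)
    (τ : ℝ) (P : Matrix (Fin n) (Fin n) ℝ) : ℝ :=
  ⨆ H : {H : Matrix (Fin n) (Fin n) ℝ // H.IsSymm ∧ specNorm H = 1},
    specNorm (DPhiHat σ A Abar B Bbar τ P H.1)

/-! ### Probabilistic definitions -/

/-- The Gaussian measure on `ℝ` with mean `0` and variance `σ²`. -/
def gauss (σ : ℝ) : Measure ℝ := gaussianReal 0 ⟨σ ^ 2, sq_nonneg σ⟩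

/-- The Gaussian expectation `E_ω[((A+Āω)x + (B+B̄ω)v)ᵀ·P·((A+Āω)x + (B+B̄ω)v)]`. -/
def qform (σ : ℝ) (A Abar : Matrix (Fin n) (Fin n) ℝ) (B Bbar : Matrix (Fin n) (Fin m) ℝ)
    (P : Matrix (Fin n) (Fin n) ℝ) (x : Fin n → ℝ) (v : Fin m → ℝ) : ℝ :=
  ∫ s, (((A + s • Abar).mulVec x + (B + s • Bbar).mulVec v) ⬝ᵥ
      P.mulVec ((A + s • Abar).mulVec x + (B + s • Bbar).mulVec v)) ∂(gauss σ)

/-- The data of the stochastic control system: a probability space `(Ω, F, Pr)`,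
system matrices `A, Ā, B, B̄`, a noise level `σ > 0`, an i.i.d. sequence `w` of
Gaussian random variables with mean `0` and variance `σ²`, and a sub-σ-algebra `G`
independent of the noise. -/
structure Ctx (n m : ℕ) (Ω : Type) [mΩ : MeasurableSpace Ω] where
  Pr : Measure Ω
  isProb : IsProbabilityMeasure Pr
  σ : ℝ
  hσ : 0 < σ
  A : Matrix (Fin n) (Fin n) ℝ
  Abar : Matrix (Fin n) (Fin n) ℝ
  B : Matrix (Fin n) (Fin m) ℝ
  Bbar : Matrix (Fin n) (Fin m) ℝ
  w : ℕ → Ω → ℝ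
  hw_meas : ∀ k, Measurable (w k)
  hw_gauss : ∀ k, Pr.map (w k) = gauss σ
  hw_iid : iIndepFun w Pr
  G : MeasurableSpace Ω
  hG : G ≤ mΩ
  hw_indep_G : Indep (⨆ k, MeasurableSpace.comap (w k) inferInstance) G Pr

variable {Ω : Type} [MeasurableSpace Ω]

/-- The filtration `F_k = G ∨ σ(ω₀, …, ω_{k−1})`. -/
def Ctx.Fk (C : Ctx n m Ω) (k : ℕ) : MeasurableSpace Ω :=
  C.G ⊔ ⨆ i ∈ Finset.range k, MeasurableSpace.comap (C.w i) inferInstance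

/-- Admissible policies: `u_k` is `F_k`-measurable and square-integrable. -/
def Ctx.Admissible (C : Ctx n m Ω) (u : ℕ → Ω → Fin m → ℝ) : Prop :=
  ∀ k, Measurable[C.Fk k] (u k) ∧ MemLp (u k) 2 C.Pr

/-- Admissible initial states: `G`-measurable and square-integrable. -/
def Ctx.InitOK (C : Ctx n m Ω) (x : Ω → Fin n → ℝ) : Prop :=
  Measurable[C.G] x ∧ MemLp x 2 C.Pr

/-- The state trajectory `x_{k+1} = (A + Ā·ω_k)x_k + (B + B̄·ω_k)u_k`. -/
def Ctx.traj (C : Ctx n m Ω) (x0 : Ω → Fin n → ℝ) (u : ℕ → Ω → Fin m → ℝ) :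
    ℕ → Ω → Fin n → ℝ
  | 0 => x0
  | k + 1 => fun s =>
      (C.A + C.w k s • C.Abar).mulVec (C.traj x0 u k s)
      + (C.B + C.w k s • C.Bbar).mulVec (u k s)

/-- `E[xᵀx]`. -/
def msSq {n : ℕ} (Pr : Measure Ω) (x : Ω → Fin n → ℝ) : ℝ := ∫ s, x s ⬝ᵥ x s ∂Pr

/-- The mean-square norm `‖x‖_ms = (E[xᵀx])^{1/2}`. -/
def msNorm {n : ℕ} (Pr : Measure Ω) (x : Ω → Fin n → ℝ) : ℝ := Real.sqrt (msSq Pr x)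

/-- The mean-square stabilizing rate `ρ(u)` of a policy. -/
def Ctx.rate (C : Ctx n m Ω) (u : ℕ → Ω → Fin m → ℝ) : ℝ :=
  sInf {ρ : ℝ | 0 ≤ ρ ∧ ∃ κ : ℝ, 0 ≤ κ ∧ ∀ x0, C.InitOK x0 → ∀ k : ℕ,
    msSq C.Pr (C.traj x0 u k) ≤ κ * ρ ^ (2 * k) * msSq C.Pr x0}

/-- The optimal stabilizing rate `ρ* = inf_{u ∈ U} ρ(u)`. -/
def Ctx.rhoStar (C : Ctx n m Ω) : ℝ :=
  sInf {r : ℝ | ∃ u, C.Admissible u ∧ r = C.rate u}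

/-- `η(x) = inf_{u ∈ U} sup_{k ∈ ℕ} ‖x_k‖_ms/(ρ*)^k` (with values in `[0,∞]`). -/
def Ctx.eta (C : Ctx n m Ω) (x : Ω → Fin n → ℝ) : ℝ≥0∞ :=
  ⨅ (u : ℕ → Ω → Fin m → ℝ) (_ : C.Admissible u),
    ⨆ k : ℕ, ENNReal.ofReal (msNorm C.Pr (C.traj x u k) / C.rhoStar ^ k)

/-- The per-trajectory mean-square stabilizing rate `ρ(u; x₀)`. -/
def Ctx.rateAt (C : Ctx n m Ω) (x0 : Ω → Fin n → ℝ) (u : ℕ → Ω → Fin m → ℝ) : ℝ :=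
  sInf {ρ : ℝ | 0 ≤ ρ ∧ ∃ κ : ℝ, 0 ≤ κ ∧ ∀ k : ℕ,
    msSq C.Pr (C.traj x0 u k) ≤ κ * ρ ^ (2 * k) * msSq C.Pr x0}

/-- The cost `J(x₀,u) = limsup_k (1/k)·log(E[x_kᵀx_k]/E[x₀ᵀx₀])`. -/
def Ctx.J (C : Ctx n m Ω) (x0 : Ω → Fin n → ℝ) (u : ℕ → Ω → Fin m → ℝ) : ℝ :=
  Filter.limsup
    (fun k : ℕ => (1 / (k : ℝ)) * Real.log (msSq C.Pr (C.traj x0 u k) / msSq C.Pr x0))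
    Filter.atTop

/-- Feedback policies: `u_k = μ_k(x_k)` for Borel-measurable `μ_k`. -/
def Ctx.IsFeedback (C : Ctx n m Ω) (x0 : Ω → Fin n → ℝ) (u : ℕ → Ω → Fin m → ℝ) : Prop :=
  ∃ μ : ℕ → (Fin n → ℝ) → Fin m → ℝ, (∀ k, Measurable (μ k)) ∧
    ∀ k s, u k s = μ k (C.traj x0 u k s)

/-- The closed-loop trajectory under a stationary feedback law `μ`. -/
def Ctx.fbTraj (C : Ctx n m Ω) (x0 : Ω → Fin n → ℝ) (μ : (Fin n → ℝ) → Fin m → ℝ) :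
    ℕ → Ω → Fin n → ℝ
  | 0 => x0
  | k + 1 => fun s =>
      (C.A + C.w k s • C.Abar).mulVec (C.fbTraj x0 μ k s)
      + (C.B + C.w k s • C.Bbar).mulVec (μ (C.fbTraj x0 μ k s))

/-- The stationary policy `u* given by `u*_k = μ(x*_k)` along its own closed-loop
trajectory, for a stationary feedback law `μ`. -/
def Ctx.fbPolicy (C : Ctx n m Ω) (x0 : Ω → Fin n → ℝ) (μ : (Fin n → ℝ) → Fin m → ℝ) :
    ℕ → Ω → Fin m → ℝ :=
  fun k s => μ (C.fbTraj x0 μ k s)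

/-- The linear feedback policy `u*_k = −K·x*_k` along its own trajectory. -/
def Ctx.linFbPolicy (C : Ctx n m Ω) (x0 : Ω → Fin n → ℝ) (K : Matrix (Fin m) (Fin n) ℝ) :
    ℕ → Ω → Fin m → ℝ :=
  C.fbPolicy x0 (fun x => -(K.mulVec x))

/-- `ξ_♯(x) = inf_{v ∈ ℝ^m} ‖(A + Ā·ω)x + (B + B̄·ω)v‖_ms`, realized with `ω = ω₀`. -/
def Ctx.xiSharp (C : Ctx n m Ω) (x : Ω → Fin n → ℝ) : ℝ :=
  ⨅ v : Fin m → ℝ, msNorm C.Pr (fun s =>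
    (C.A + C.w 0 s • C.Abar).mulVec (x s) + (C.B + C.w 0 s • C.Bbar).mulVec v)

/-- Extended-real logarithm: `log t` for `t > 0` and `−∞` for `t ≤ 0`. -/
def elog (t : ℝ) : EReal := if t ≤ 0 then ⊥ else ((Real.log t : ℝ) : EReal)

/-- The cost `J(x₀,u)` interpreted with values in `[−∞,∞]`. -/
def Ctx.Je (C : Ctx n m Ω) (x0 : Ω → Fin n → ℝ) (u : ℕ → Ω → Fin m → ℝ) : EReal :=
  Filter.limsup
    (fun k : ℕ => ((1 / (k : ℝ) : ℝ) : EReal) * elog (msSq C.Pr (C.traj x0 u k) / msSq C.Pr x0))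
    Filter.atTop



/-! ### Auxiliary lemmas for Statement 3 -/

open Filter in
private lemma exp_trick_le {x c : ℝ} (hc : 0 < c)
    (h : ∀ ε : ℝ, 0 < ε → x ≤ 2 * Real.log (c + ε)) :
    x ≤ 2 * Real.log c := by
  have h1 : Real.exp (x / 2) ≤ c := by
    refine le_of_forall_pos_le_add fun ε hε => ?_
    have h2 : x / 2 ≤ Real.log (c + ε) := by linarith [h ε hε]
    calc Real.exp (x / 2) ≤ Real.exp (Real.log (c + ε)) := Real.exp_le_exp.mpr h2
      _ = c + ε := Real.exp_log (by linarith)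
  have h3 := Real.log_le_log (Real.exp_pos _) h1
  rw [Real.log_exp] at h3; linarith

open Filter in
private lemma exp_trick_ge {x c : ℝ} (hc : 0 < c)
    (h : ∀ r : ℝ, 0 < r → r < c → 2 * Real.log r ≤ x) :
    2 * Real.log c ≤ x := by
  have h1 : c ≤ Real.exp (x / 2) := by
    by_contra hlt
    push_neg at hlt
    have he := Real.exp_pos (x / 2)
    set r := (Real.exp (x / 2) + c) / 2 with hrdef
    have hr0 : 0 < r := by positivity
    have hrc : r < c := by rw [hrdef]; linarith
    have h2 := h r hr0 hrc
    have h3 : r ≤ Real.exp (x / 2) := by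
      have h4 : Real.log r ≤ x / 2 := by linarith
      calc r = Real.exp (Real.log r) := (Real.exp_log hr0).symm
        _ ≤ Real.exp (x / 2) := Real.exp_le_exp.mpr h4
    rw [hrdef] at h3; linarith
  have h3 := Real.log_le_log hc h1
  rw [Real.log_exp] at h3; linarith

open Filter in
private lemma limsup_log_eq {b : ℕ → ℝ} (hb : ∀ k, 0 < b k)
    (hr : 0 < sInf {ρ : ℝ | 0 ≤ ρ ∧ ∃ κ : ℝ, 0 ≤ κ ∧ ∀ k : ℕ, b k ≤ κ * ρ ^ (2 * k) * b 0}) :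
    Filter.limsup (fun k : ℕ => (1 / (k : ℝ)) * Real.log (b k / b 0)) Filter.atTop
      = 2 * Real.log
          (sInf {ρ : ℝ | 0 ≤ ρ ∧ ∃ κ : ℝ, 0 ≤ κ ∧ ∀ k : ℕ, b k ≤ κ * ρ ^ (2 * k) * b 0}) := by
  set S : Set ℝ := {ρ : ℝ | 0 ≤ ρ ∧ ∃ κ : ℝ, 0 ≤ κ ∧ ∀ k : ℕ, b k ≤ κ * ρ ^ (2 * k) * b 0}
    with hSdef
  set f : ℕ → ℝ := fun k : ℕ => (1 / (k : ℝ)) * Real.log (b k / b 0) with hfdef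
  set c : ℝ := sInf S with hcdef
  have hb0 : 0 < b 0 := hb 0
  have hcpos : 0 < c := hr
  have hSne : S.Nonempty := by
    by_contra hne
    rw [Set.not_nonempty_iff_eq_empty] at hne
    rw [hcdef, hne, Real.sInf_empty] at hcpos
    exact lt_irrefl 0 hcpos
  have hSbdd : BddBelow S := ⟨0, fun r hrS => hrS.1⟩
  have hmem : ∀ r : ℝ, c < r → r ∈ S := by
    intro r hcr
    obtain ⟨s, hsS, hsr⟩ := exists_lt_of_csInf_lt hSne hcr
    obtain ⟨hs0, κ, hκ, hbd⟩ := hsS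
    refine ⟨hs0.trans hsr.le, κ, hκ, fun k => (hbd k).trans ?_⟩
    have hps : s ^ (2 * k) ≤ r ^ (2 * k) := pow_le_pow_left₀ hs0 hsr.le _
    have h2 : κ * s ^ (2 * k) ≤ κ * r ^ (2 * k) := mul_le_mul_of_nonneg_left hps hκ
    exact mul_le_mul_of_nonneg_right h2 hb0.le
  have hfreq : ∀ r₀ : ℝ, 0 < r₀ → r₀ < c → ∃ᶠ k in atTop, 2 * Real.log r₀ ≤ f k := by
    intro r₀ h0 hlt
    have hnot : r₀ ∉ S := fun hmem' => absurd (csInf_le hSbdd hmem') (not_le.mpr hlt)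
    rw [frequently_atTop]
    intro N
    set κ : ℝ := 1 + ∑ j ∈ Finset.range (N + 1), b j / (r₀ ^ (2 * j) * b 0) with hκdef
    have hterm : ∀ j ∈ Finset.range (N + 1), 0 ≤ b j / (r₀ ^ (2 * j) * b 0) := by
      intro j _
      have := hb j
      positivity
    have hκ1 : 1 ≤ κ := by
      have := Finset.sum_nonneg hterm
      rw [hκdef]; linarith
    have hκ0 : 0 ≤ κ := by linarith
    have hex : ∃ k : ℕ, ¬ b k ≤ κ * r₀ ^ (2 * k) * b 0 := by
      by_contra hall
      push_neg at hall
      exact hnot ⟨h0.le, κ, hκ0, hall⟩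
    obtain ⟨k, hk⟩ := hex
    push_neg at hk
    have hkN : N < k := by
      by_contra hle
      push_neg at hle
      have hmemk : k ∈ Finset.range (N + 1) := Finset.mem_range.mpr (by omega)
      have h1 : b k / (r₀ ^ (2 * k) * b 0) ≤ κ := by
        have := Finset.single_le_sum hterm hmemk
        rw [hκdef]; linarith
      have hpos' : 0 < r₀ ^ (2 * k) * b 0 := by positivity
      have h2 : b k ≤ κ * (r₀ ^ (2 * k) * b 0) := (div_le_iff₀ hpos').mp h1
      rw [← mul_assoc] at h2
      exact absurd h2 (not_le.mpr hk)
    refine ⟨k, hkN.le, ?_⟩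
    have hklb : r₀ ^ (2 * k) * b 0 ≤ b k := by
      have h2 : 1 * (r₀ ^ (2 * k) * b 0) ≤ κ * (r₀ ^ (2 * k) * b 0) := by
        have hpos' : 0 < r₀ ^ (2 * k) * b 0 := by positivity
        exact mul_le_mul_of_nonneg_right hκ1 hpos'.le
      rw [one_mul] at h2
      rw [← mul_assoc] at h2
      linarith
    have hak : r₀ ^ (2 * k) ≤ b k / b 0 := (le_div_iff₀ hb0).mpr hklb
    have hlog : (2 * k : ℝ) * Real.log r₀ ≤ Real.log (b k / b 0) := by
      calc (2 * k : ℝ) * Real.log r₀ = Real.log (r₀ ^ (2 * k)) := by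
            rw [Real.log_pow]; push_cast; ring
        _ ≤ Real.log (b k / b 0) := Real.log_le_log (pow_pos h0 _) hak
    have hkpos : (0 : ℝ) < (k : ℝ) := by
      have : 0 < k := by omega
      exact_mod_cast this
    have hmul := mul_le_mul_of_nonneg_left hlog (by positivity : (0 : ℝ) ≤ 1 / (k : ℝ))
    calc 2 * Real.log r₀ = (1 / (k : ℝ)) * ((2 * k : ℝ) * Real.log r₀) := by
          field_simp
      _ ≤ (1 / (k : ℝ)) * Real.log (b k / b 0) := hmul
  have hfcb : IsCoboundedUnder (· ≤ ·) atTop f :=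
    IsCoboundedUnder.of_frequently_ge (hfreq (c / 2) (by linarith) (by linarith))
  have hev : ∀ r : ℝ, c < r →
      ∃ g : ℕ → ℝ, (∀ᶠ k in atTop, f k ≤ g k) ∧ Tendsto g atTop (nhds (2 * Real.log r)) := by
    intro r hcr
    obtain ⟨hr0, κ, hκ, hbd⟩ := hmem r hcr
    have hrpos : 0 < r := hcpos.trans hcr
    refine ⟨fun k : ℕ => Real.log (κ + 1) / (k : ℝ) + 2 * Real.log r, ?_, ?_⟩
    · filter_upwards [eventually_gt_atTop 0] with k hk
      have hkpos : (0 : ℝ) < (k : ℝ) := by exact_mod_cast hk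
      have h1 : b k / b 0 ≤ (κ + 1) * r ^ (2 * k) := by
        rw [div_le_iff₀ hb0]
        calc b k ≤ κ * r ^ (2 * k) * b 0 := hbd k
          _ ≤ (κ + 1) * r ^ (2 * k) * b 0 := by
              have hp : 0 < r ^ (2 * k) := pow_pos hrpos _
              nlinarith
      have h2 : Real.log (b k / b 0) ≤ Real.log (κ + 1) + (2 * k : ℝ) * Real.log r := by
        calc Real.log (b k / b 0) ≤ Real.log ((κ + 1) * r ^ (2 * k)) :=
              Real.log_le_log (div_pos (hb k) hb0) h1
          _ = Real.log (κ + 1) + Real.log (r ^ (2 * k)) :=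
              Real.log_mul (by linarith) (pow_ne_zero _ hrpos.ne')
          _ = Real.log (κ + 1) + (2 * k : ℝ) * Real.log r := by
              rw [Real.log_pow]; push_cast; ring
      have h3 := mul_le_mul_of_nonneg_left h2 (by positivity : (0 : ℝ) ≤ 1 / (k : ℝ))
      calc f k ≤ (1 / (k : ℝ)) * (Real.log (κ + 1) + (2 * k : ℝ) * Real.log r) := h3
        _ = Real.log (κ + 1) / (k : ℝ) + 2 * Real.log r := by field_simp
    · have h1 := tendsto_const_div_atTop_nhds_zero_nat (Real.log (κ + 1))
      have h2 := h1.add (tendsto_const_nhds (x := 2 * Real.log r) (f := atTop))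
      rwa [zero_add] at h2
  have hfbdd : IsBoundedUnder (· ≤ ·) atTop f := by
    obtain ⟨g, hfg, hg⟩ := hev (c + 1) (by linarith)
    exact (hg.isBoundedUnder_le).mono_le hfg
  have hub : ∀ ε : ℝ, 0 < ε → limsup f atTop ≤ 2 * Real.log (c + ε) := by
    intro ε hε
    obtain ⟨g, hfg, hg⟩ := hev (c + ε) (by linarith)
    calc limsup f atTop ≤ limsup g atTop := limsup_le_limsup hfg hfcb hg.isBoundedUnder_le
      _ = 2 * Real.log (c + ε) := hg.limsup_eq
  have hlb : ∀ r₀ : ℝ, 0 < r₀ → r₀ < c → 2 * Real.log r₀ ≤ limsup f atTop := fun r₀ h0 hlt =>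
    le_limsup_of_frequently_le (hfreq r₀ h0 hlt) hfbdd
  exact le_antisymm (exp_trick_le hcpos hub) (exp_trick_ge hcpos hlb)

/-- `J(x₀,u) = 2·log ρ(u; x₀)`, and consequently the infima and
the minimizers of `J(x₀,·)` and `ρ(·; x₀)` over admissible policies coincide. -/
theorem J_eq_two_log_rate {n m : ℕ} {Ω : Type} [MeasurableSpace Ω] (C : Ctx n m Ω)
    (hn : 0 < n) (hm : 0 < m)
    (x0 : Ω → Fin n → ℝ) (hx0 : C.InitOK x0)
    (u : ℕ → Ω → Fin m → ℝ) (hu : C.Admissible u)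
    (hpos : ∀ k : ℕ, 0 < msSq C.Pr (C.traj x0 u k))
    (hr : 0 < C.rateAt x0 u) :
    C.J x0 u = 2 * Real.log (C.rateAt x0 u) ∧
    ((∀ u' : ℕ → Ω → Fin m → ℝ, C.Admissible u' →
        (∀ k : ℕ, 0 < msSq C.Pr (C.traj x0 u' k)) ∧ 0 < C.rateAt x0 u') →
      (sInf {j : ℝ | ∃ u', C.Admissible u' ∧ j = C.J x0 u'}
          = 2 * Real.log (sInf {r : ℝ | ∃ u', C.Admissible u' ∧ r = C.rateAt x0 u'}) ∧
        ∀ u' : ℕ → Ω → Fin m → ℝ, C.Admissible u' →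
          ((∀ u'' : ℕ → Ω → Fin m → ℝ, C.Admissible u'' → C.J x0 u' ≤ C.J x0 u'')
            ↔ (∀ u'' : ℕ → Ω → Fin m → ℝ, C.Admissible u'' →
                C.rateAt x0 u' ≤ C.rateAt x0 u'')))) := by
  have hmain : ∀ u' : ℕ → Ω → Fin m → ℝ, (∀ k : ℕ, 0 < msSq C.Pr (C.traj x0 u' k)) →
      0 < C.rateAt x0 u' → C.J x0 u' = 2 * Real.log (C.rateAt x0 u') := by
    intro u' hp hr'
    exact limsup_log_eq (b := fun k => msSq C.Pr (C.traj x0 u' k)) hp hr'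
  refine ⟨hmain u hpos hr, ?_⟩
  intro Hall
  have hSpos : ∀ r ∈ {r : ℝ | ∃ u', C.Admissible u' ∧ r = C.rateAt x0 u'}, 0 < r := by
    rintro r ⟨u', hu', rfl⟩
    exact (Hall u' hu').2
  have hSne : Set.Nonempty {r : ℝ | ∃ u', C.Admissible u' ∧ r = C.rateAt x0 u'} :=
    ⟨C.rateAt x0 u, u, hu, rfl⟩
  have hSbdd : BddBelow {r : ℝ | ∃ u', C.Admissible u' ∧ r = C.rateAt x0 u'} :=
    ⟨0, fun r hr' => (hSpos r hr').le⟩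
  have hT' : ∀ r ∈ {r : ℝ | ∃ u', C.Admissible u' ∧ r = C.rateAt x0 u'},
      2 * Real.log r ∈ {j : ℝ | ∃ u', C.Admissible u' ∧ j = C.J x0 u'} := by
    rintro r ⟨u', hu', rfl⟩
    exact ⟨u', hu', (hmain u' (Hall u' hu').1 (Hall u' hu').2).symm⟩
  set c : ℝ := sInf {r : ℝ | ∃ u', C.Admissible u' ∧ r = C.rateAt x0 u'} with hcdef
  have hc0 : 0 ≤ c := le_csInf hSne fun r hr' => (hSpos r hr').le
  constructor
  · rcases eq_or_lt_of_le hc0 with hc | hc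
    · have hTnb : ¬ BddBelow {j : ℝ | ∃ u', C.Admissible u' ∧ j = C.J x0 u'} := by
        rintro ⟨L, hL⟩
        have hlt : c < Real.exp ((L - 1) / 2) := by
          rw [← hc]; exact Real.exp_pos _
        obtain ⟨r, hrS, hrlt⟩ := exists_lt_of_csInf_lt hSne hlt
        have hrpos := hSpos r hrS
        have hmem2 := hT' r hrS
        have h2 := hL hmem2
        have h3 : Real.log r < (L - 1) / 2 := by
          have := Real.log_lt_log hrpos hrlt
          rwa [Real.log_exp] at this
        linarith
      rw [Real.sInf_of_not_bddBelow hTnb, ← hc, Real.log_zero, mul_zero]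
    · have hTlb : ∀ j ∈ {j : ℝ | ∃ u', C.Admissible u' ∧ j = C.J x0 u'},
          2 * Real.log c ≤ j := by
        rintro j ⟨u', hu', rfl⟩
        rw [hmain u' (Hall u' hu').1 (Hall u' hu').2]
        have h1 : c ≤ C.rateAt x0 u' := csInf_le hSbdd ⟨u', hu', rfl⟩
        have := Real.log_le_log hc h1
        linarith
      have hTbdd : BddBelow {j : ℝ | ∃ u', C.Admissible u' ∧ j = C.J x0 u'} :=
        ⟨2 * Real.log c, hTlb⟩
      have hTne : Set.Nonempty {j : ℝ | ∃ u', C.Admissible u' ∧ j = C.J x0 u'} :=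
        ⟨C.J x0 u, u, hu, rfl⟩
      refine le_antisymm ?_ (le_csInf hTne hTlb)
      refine exp_trick_le hc fun ε hε => ?_
      obtain ⟨r, hrS, hrlt⟩ := exists_lt_of_csInf_lt hSne (show c < c + ε by linarith)
      have hrpos := hSpos r hrS
      calc sInf {j : ℝ | ∃ u', C.Admissible u' ∧ j = C.J x0 u'} ≤ 2 * Real.log r :=
            csInf_le hTbdd (hT' r hrS)
        _ ≤ 2 * Real.log (c + ε) := by
            have := Real.log_le_log hrpos hrlt.le
            linarith
  · intro u' hu'
    have hr' := (Hall u' hu').2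
    constructor
    · intro h u'' hu''
      have hr'' := (Hall u'' hu'').2
      have h1 := h u'' hu''
      rw [hmain u' (Hall u' hu').1 hr', hmain u'' (Hall u'' hu'').1 hr''] at h1
      exact (Real.log_le_log_iff hr' hr'').mp (by linarith)
    · intro h u'' hu''
      have hr'' := (Hall u'' hu'').2
      have h1 := h u'' hu''
      rw [hmain u' (Hall u' hu').1 hr', hmain u'' (Hall u'' hu'').1 hr'']
      have := Real.log_le_log hr' h1
      linarith


end SCS
end
end

section
/- Assume R₀ := BᵀB + σ²·B̄ᵀB̄ is positive definite. Fix a > 0 and let S_a := {X symmetric n×n : X ⪰ a·I and Tr X = 1}. Then for all P, Q ∈ S_a, ‖Φ(P) − Φ(Q)‖ ≤ L_Φ(a)·‖P − Q‖, where L_Φ(a) := α_A + 2·α_S²·c_R(a) + α_S²·α_R·c_R(a)². Moreover, sup_{P∈S_a} ‖Φ(P)‖ ≤ C_Φ(a) := α_A + α_S²·c_R(a). -/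
open Matrix MeasureTheory ProbabilityTheory
open scoped ENNReal Classical

noncomputable section

namespace SCS

variable {n m : ℕ}

variable {Ω : Type} [MeasurableSpace Ω]

section PhiToolkit

variable {p q r s : ℕ}

lemma dot_self_nonneg (x : Fin p → ℝ) : 0 ≤ x ⬝ᵥ x :=
  Finset.sum_nonneg fun i _ => mul_self_nonneg _

/-- Euclidean norm of a plain vector. -/
def enorm (x : Fin p → ℝ) : ℝ := Real.sqrt (x ⬝ᵥ x)

lemma enorm_nonneg (x : Fin p → ℝ) : 0 ≤ enorm x := Real.sqrt_nonneg _

lemma enorm_sq (x : Fin p → ℝ) : enorm x ^ 2 = x ⬝ᵥ x := Real.sq_sqrt (dot_self_nonneg x)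

lemma dot_le_enorm (x y : Fin p → ℝ) : x ⬝ᵥ y ≤ enorm x * enorm y := by
  have h := Finset.sum_mul_sq_le_sq_mul_sq Finset.univ x y
  have h1 : x ⬝ᵥ y ≤ Real.sqrt ((x ⬝ᵥ y) ^ 2) := by
    rw [Real.sqrt_sq_eq_abs]; exact le_abs_self _
  refine h1.trans ?_
  rw [show enorm x * enorm y = Real.sqrt ((x ⬝ᵥ x) * (y ⬝ᵥ y)) by
    rw [Real.sqrt_mul (dot_self_nonneg x)]; rfl]
  apply Real.sqrt_le_sqrt
  simpa [dotProduct, sq, mul_pow] using h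
  
lemma enorm_triangle (x y : Fin p → ℝ) : enorm (x + y) ≤ enorm x + enorm y := by
  have hd : (x + y) ⬝ᵥ (x + y) = x ⬝ᵥ x + 2 * (x ⬝ᵥ y) + y ⬝ᵥ y := by
    simp [add_dotProduct, dotProduct_add, dotProduct_comm x y]; ring
  have h2 : (x + y) ⬝ᵥ (x + y) ≤ (enorm x + enorm y) ^ 2 := by
    have := dot_le_enorm x y
    have hx := enorm_sq x; have hy := enorm_sq y
    nlinarith [enorm_nonneg x, enorm_nonneg y]
  calc enorm (x + y) = Real.sqrt ((x+y) ⬝ᵥ (x+y)) := rfl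
    _ ≤ Real.sqrt ((enorm x + enorm y)^2) := Real.sqrt_le_sqrt h2
    _ = enorm x + enorm y := Real.sqrt_sq (add_nonneg (enorm_nonneg x) (enorm_nonneg y))

lemma enorm_smul (c : ℝ) (x : Fin p → ℝ) : enorm (c • x) = |c| * enorm x := by
  unfold enorm
  rw [smul_dotProduct, dotProduct_smul, smul_eq_mul, smul_eq_mul, ← mul_assoc,
    show c * c = c ^ 2 by ring, Real.sqrt_mul (sq_nonneg c), Real.sqrt_sq_eq_abs]

lemma mulVec_frob (M : Matrix (Fin p) (Fin q) ℝ) (x : Fin q → ℝ) :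
    (M *ᵥ x) ⬝ᵥ (M *ᵥ x) ≤ (∑ i, ∑ j, M i j ^ 2) * (x ⬝ᵥ x) := by
  have key : ∀ i, (M *ᵥ x) i * (M *ᵥ x) i ≤ (∑ j, M i j ^ 2) * (x ⬝ᵥ x) := by
    intro i
    have h := Finset.sum_mul_sq_le_sq_mul_sq Finset.univ (fun j => M i j) x
    have : (M *ᵥ x) i = ∑ j, M i j * x j := rfl
    rw [this, ← sq]
    simpa [dotProduct, sq] using h
  calc (M *ᵥ x) ⬝ᵥ (M *ᵥ x) = ∑ i, (M *ᵥ x) i * (M *ᵥ x) i := rfl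
    _ ≤ ∑ i, (∑ j, M i j ^ 2) * (x ⬝ᵥ x) := Finset.sum_le_sum fun i _ => key i
    _ = (∑ i, ∑ j, M i j ^ 2) * (x ⬝ᵥ x) := by rw [Finset.sum_mul]


lemma bddAbove_rayleigh (N : Matrix (Fin p) (Fin p) ℝ) :
    BddAbove (Set.range fun x : {x : Fin p → ℝ // x ⬝ᵥ x = 1} => x.1 ⬝ᵥ N *ᵥ x.1) := by
  refine ⟨Real.sqrt (∑ i, ∑ j, N i j ^ 2), ?_⟩
  rintro _ ⟨x, rfl⟩
  have hx1 : enorm x.1 = 1 := by rw [enorm, x.2, Real.sqrt_one]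
  calc x.1 ⬝ᵥ N *ᵥ x.1 ≤ enorm x.1 * enorm (N *ᵥ x.1) := dot_le_enorm _ _
    _ = Real.sqrt ((N *ᵥ x.1) ⬝ᵥ (N *ᵥ x.1)) := by rw [hx1, one_mul]; rfl
    _ ≤ Real.sqrt (∑ i, ∑ j, N i j ^ 2) := by
        apply Real.sqrt_le_sqrt
        have := mulVec_frob N x.1
        rwa [x.2, mul_one] at this

lemma bddBelow_rayleigh (N : Matrix (Fin p) (Fin p) ℝ) :
    BddBelow (Set.range fun x : {x : Fin p → ℝ // x ⬝ᵥ x = 1} => x.1 ⬝ᵥ N *ᵥ x.1) := by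
  refine ⟨-Real.sqrt (∑ i, ∑ j, N i j ^ 2), ?_⟩
  rintro _ ⟨x, rfl⟩
  have hx1 : enorm x.1 = 1 := by rw [enorm, x.2, Real.sqrt_one]
  have h : (-x.1) ⬝ᵥ N *ᵥ x.1 ≤ Real.sqrt (∑ i, ∑ j, N i j ^ 2) := by
    have he : enorm (-x.1) = 1 := by
      rw [show -x.1 = (-1 : ℝ) • x.1 by simp, enorm_smul, hx1]; norm_num
    calc (-x.1) ⬝ᵥ N *ᵥ x.1 ≤ enorm (-x.1) * enorm (N *ᵥ x.1) := dot_le_enorm _ _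
      _ = Real.sqrt ((N *ᵥ x.1) ⬝ᵥ (N *ᵥ x.1)) := by rw [he, one_mul]; rfl
      _ ≤ Real.sqrt (∑ i, ∑ j, N i j ^ 2) := by
          apply Real.sqrt_le_sqrt
          have := mulVec_frob N x.1
          rwa [x.2, mul_one] at this
  rw [neg_dotProduct] at h
  linarith

lemma le_lamMax (N : Matrix (Fin p) (Fin p) ℝ) (x : Fin p → ℝ) (hx : x ⬝ᵥ x = 1) :
    x ⬝ᵥ N *ᵥ x ≤ lamMax N :=
  le_ciSup (bddAbove_rayleigh N) (⟨x, hx⟩ : {x : Fin p → ℝ // x ⬝ᵥ x = 1})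

lemma lamMin_le (N : Matrix (Fin p) (Fin p) ℝ) (x : Fin p → ℝ) (hx : x ⬝ᵥ x = 1) :
    lamMin N ≤ x ⬝ᵥ N *ᵥ x :=
  ciInf_le (bddBelow_rayleigh N) (⟨x, hx⟩ : {x : Fin p → ℝ // x ⬝ᵥ x = 1})

lemma lamMax_le {N : Matrix (Fin p) (Fin p) ℝ} {c : ℝ} (hc : 0 ≤ c)
    (h : ∀ x : Fin p → ℝ, x ⬝ᵥ x = 1 → x ⬝ᵥ N *ᵥ x ≤ c) : lamMax N ≤ c := by
  unfold lamMax
  rcases isEmpty_or_nonempty {x : Fin p → ℝ // x ⬝ᵥ x = 1} with he | hne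
  · rw [Real.iSup_of_isEmpty]; exact hc
  · exact ciSup_le fun x => h x.1 x.2

lemma quad_transpose_mul (M : Matrix (Fin p) (Fin q) ℝ) (x : Fin q → ℝ) :
    x ⬝ᵥ (Mᵀ * M) *ᵥ x = (M *ᵥ x) ⬝ᵥ (M *ᵥ x) := by
  rw [← mulVec_mulVec, dotProduct_mulVec, vecMul_transpose]

lemma quad_le_lamMax_mul (N : Matrix (Fin p) (Fin p) ℝ) (x : Fin p → ℝ) :
    x ⬝ᵥ N *ᵥ x ≤ lamMax N * (x ⬝ᵥ x) := by
  by_cases hx : x ⬝ᵥ x = 0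
  · have hx0 : x = 0 := dotProduct_self_eq_zero.mp hx
    simp [hx0, hx]
  · have hpos : 0 < x ⬝ᵥ x := lt_of_le_of_ne (dot_self_nonneg x) (Ne.symm hx)
    set t := Real.sqrt (x ⬝ᵥ x) with ht
    have htpos : 0 < t := Real.sqrt_pos.mpr hpos
    have ht2 : t ^ 2 = x ⬝ᵥ x := Real.sq_sqrt hpos.le
    have hu : (t⁻¹ • x) ⬝ᵥ (t⁻¹ • x) = 1 := by
      rw [smul_dotProduct, dotProduct_smul, smul_eq_mul, smul_eq_mul, ← mul_assoc, ← ht2]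
      field_simp
    have h := le_lamMax N _ hu
    rw [mulVec_smul, smul_dotProduct, dotProduct_smul, smul_eq_mul, smul_eq_mul,
      ← mul_assoc] at h
    have h2 : x ⬝ᵥ N *ᵥ x ≤ (t * t) * lamMax N := by
      have := mul_le_mul_of_nonneg_left h (by positivity : (0:ℝ) ≤ t * t)
      calc x ⬝ᵥ N *ᵥ x = (t * t) * (t⁻¹ * t⁻¹ * (x ⬝ᵥ N *ᵥ x)) := by
            field_simp
        _ ≤ (t * t) * lamMax N := this
    calc x ⬝ᵥ N *ᵥ x ≤ (t * t) * lamMax N := h2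
      _ = lamMax N * (x ⬝ᵥ x) := by rw [← ht2]; ring

lemma lamMin_mul_le_quad (N : Matrix (Fin p) (Fin p) ℝ) (x : Fin p → ℝ) :
    lamMin N * (x ⬝ᵥ x) ≤ x ⬝ᵥ N *ᵥ x := by
  by_cases hx : x ⬝ᵥ x = 0
  · have hx0 : x = 0 := dotProduct_self_eq_zero.mp hx
    simp [hx0, hx]
  · have hpos : 0 < x ⬝ᵥ x := lt_of_le_of_ne (dot_self_nonneg x) (Ne.symm hx)
    set t := Real.sqrt (x ⬝ᵥ x) with ht
    have htpos : 0 < t := Real.sqrt_pos.mpr hpos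
    have ht2 : t ^ 2 = x ⬝ᵥ x := Real.sq_sqrt hpos.le
    have hu : (t⁻¹ • x) ⬝ᵥ (t⁻¹ • x) = 1 := by
      rw [smul_dotProduct, dotProduct_smul, smul_eq_mul, smul_eq_mul, ← mul_assoc, ← ht2]
      field_simp
    have h := lamMin_le N _ hu
    rw [mulVec_smul, smul_dotProduct, dotProduct_smul, smul_eq_mul, smul_eq_mul,
      ← mul_assoc] at h
    have := mul_le_mul_of_nonneg_left h (by positivity : (0:ℝ) ≤ t * t)
    calc lamMin N * (x ⬝ᵥ x) = (t * t) * lamMin N := by rw [← ht2]; ring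
      _ ≤ (t * t) * (t⁻¹ * t⁻¹ * (x ⬝ᵥ N *ᵥ x)) := this
      _ = x ⬝ᵥ N *ᵥ x := by field_simp

lemma specNorm_nonneg (M : Matrix (Fin p) (Fin q) ℝ) : 0 ≤ specNorm M := Real.sqrt_nonneg _

lemma enorm_mulVec_le (M : Matrix (Fin p) (Fin q) ℝ) (x : Fin q → ℝ) :
    enorm (M *ᵥ x) ≤ specNorm M * enorm x := by
  have h : (M *ᵥ x) ⬝ᵥ (M *ᵥ x) ≤ lamMax (Mᵀ * M) * (x ⬝ᵥ x) := by
    rw [← quad_transpose_mul]; exact quad_le_lamMax_mul _ x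
  calc enorm (M *ᵥ x) = Real.sqrt ((M *ᵥ x) ⬝ᵥ (M *ᵥ x)) := rfl
    _ ≤ Real.sqrt (lamMax (Mᵀ * M) * (x ⬝ᵥ x)) := Real.sqrt_le_sqrt h
    _ = specNorm M * enorm x := by
        rw [Real.sqrt_mul' _ (dot_self_nonneg x)]; rfl

lemma specNorm_le {M : Matrix (Fin p) (Fin q) ℝ} {c : ℝ} (hc : 0 ≤ c)
    (h : ∀ x : Fin q → ℝ, x ⬝ᵥ x = 1 → enorm (M *ᵥ x) ≤ c) : specNorm M ≤ c := by
  have hl : lamMax (Mᵀ * M) ≤ c ^ 2 := by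
    apply lamMax_le (by positivity)
    intro x hx
    rw [quad_transpose_mul, ← enorm_sq]
    exact pow_le_pow_left₀ (enorm_nonneg _) (h x hx) 2
  calc specNorm M = Real.sqrt (lamMax (Mᵀ * M)) := rfl
    _ ≤ Real.sqrt (c ^ 2) := Real.sqrt_le_sqrt hl
    _ = c := Real.sqrt_sq hc


lemma enorm_unit {x : Fin p → ℝ} (hx : x ⬝ᵥ x = 1) : enorm x = 1 := by
  rw [enorm, hx, Real.sqrt_one]

lemma specNorm_mul_le (M : Matrix (Fin p) (Fin q) ℝ) (N : Matrix (Fin q) (Fin r) ℝ) :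
    specNorm (M * N) ≤ specNorm M * specNorm N := by
  apply specNorm_le (mul_nonneg (specNorm_nonneg M) (specNorm_nonneg N))
  intro x hx
  rw [← mulVec_mulVec]
  calc enorm (M *ᵥ (N *ᵥ x)) ≤ specNorm M * enorm (N *ᵥ x) := enorm_mulVec_le _ _
    _ ≤ specNorm M * (specNorm N * enorm x) :=
        mul_le_mul_of_nonneg_left (enorm_mulVec_le _ _) (specNorm_nonneg _)
    _ = specNorm M * specNorm N := by rw [enorm_unit hx, mul_one]

lemma specNorm_add_le (M N : Matrix (Fin p) (Fin q) ℝ) :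
    specNorm (M + N) ≤ specNorm M + specNorm N := by
  apply specNorm_le (add_nonneg (specNorm_nonneg M) (specNorm_nonneg N))
  intro x hx
  rw [add_mulVec]
  calc enorm (M *ᵥ x + N *ᵥ x) ≤ enorm (M *ᵥ x) + enorm (N *ᵥ x) := enorm_triangle _ _
    _ ≤ specNorm M * enorm x + specNorm N * enorm x :=
        add_le_add (enorm_mulVec_le _ _) (enorm_mulVec_le _ _)
    _ = specNorm M + specNorm N := by rw [enorm_unit hx, mul_one, mul_one]

lemma specNorm_smul_le (c : ℝ) (M : Matrix (Fin p) (Fin q) ℝ) :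
    specNorm (c • M) ≤ |c| * specNorm M := by
  apply specNorm_le (mul_nonneg (abs_nonneg c) (specNorm_nonneg M))
  intro x hx
  rw [smul_mulVec, enorm_smul]
  calc |c| * enorm (M *ᵥ x) ≤ |c| * (specNorm M * enorm x) :=
        mul_le_mul_of_nonneg_left (enorm_mulVec_le _ _) (abs_nonneg c)
    _ = |c| * specNorm M := by rw [enorm_unit hx, mul_one]

lemma specNorm_neg (M : Matrix (Fin p) (Fin q) ℝ) : specNorm (-M) = specNorm M := by
  unfold specNorm
  congr 1
  rw [transpose_neg, Matrix.neg_mul, Matrix.mul_neg, neg_neg]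

lemma specNorm_sub_le (M N : Matrix (Fin p) (Fin q) ℝ) :
    specNorm (M - N) ≤ specNorm M + specNorm N := by
  rw [sub_eq_add_neg]
  calc specNorm (M + -N) ≤ specNorm M + specNorm (-N) := specNorm_add_le _ _
    _ = specNorm M + specNorm N := by rw [specNorm_neg]

lemma specNorm_transpose_le (M : Matrix (Fin p) (Fin q) ℝ) : specNorm Mᵀ ≤ specNorm M := by
  apply specNorm_le (specNorm_nonneg M)
  intro x hx
  set y := Mᵀ *ᵥ x with hy
  have h1 : x ⬝ᵥ M *ᵥ y = y ⬝ᵥ y := by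
    rw [dotProduct_mulVec, ← mulVec_transpose]
  have h2 : enorm y ^ 2 ≤ specNorm M * enorm y := by
    rw [enorm_sq, ← h1]
    calc x ⬝ᵥ M *ᵥ y ≤ enorm x * enorm (M *ᵥ y) := dot_le_enorm _ _
      _ ≤ 1 * (specNorm M * enorm y) := by
          rw [enorm_unit hx]
          exact mul_le_mul_of_nonneg_left (enorm_mulVec_le _ _) zero_le_one
      _ = specNorm M * enorm y := one_mul _
  by_cases h0 : enorm y = 0
  · rw [h0]; exact specNorm_nonneg M
  · have hpos : 0 < enorm y := lt_of_le_of_ne (enorm_nonneg y) (Ne.symm h0)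
    nlinarith

lemma specNorm_transpose (M : Matrix (Fin p) (Fin q) ℝ) : specNorm Mᵀ = specNorm M := by
  refine le_antisymm (specNorm_transpose_le M) ?_
  have := specNorm_transpose_le Mᵀ
  rwa [transpose_transpose] at this

lemma specNorm_le_sqrt_frob (M : Matrix (Fin p) (Fin q) ℝ) :
    specNorm M ≤ Real.sqrt (∑ i, ∑ j, M i j ^ 2) := by
  apply specNorm_le (Real.sqrt_nonneg _)
  intro x hx
  apply Real.sqrt_le_sqrt
  have := mulVec_frob M x
  rwa [hx, mul_one] at this

lemma specNorm_mul3_le {x y z : ℝ} (X : Matrix (Fin p) (Fin q) ℝ) (Y : Matrix (Fin q) (Fin r) ℝ)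
    (Z : Matrix (Fin r) (Fin s) ℝ) (hx : specNorm X ≤ x) (hy : specNorm Y ≤ y)
    (hz : specNorm Z ≤ z) (hx0 : 0 ≤ x) (hy0 : 0 ≤ y) (hz0 : 0 ≤ z) :
    specNorm (X * Y * Z) ≤ x * y * z := by
  calc specNorm (X * Y * Z) ≤ specNorm (X * Y) * specNorm Z := specNorm_mul_le _ _
    _ ≤ (specNorm X * specNorm Y) * specNorm Z :=
        mul_le_mul_of_nonneg_right (specNorm_mul_le _ _) (specNorm_nonneg _)
    _ ≤ x * y * z := by
        have h1 : specNorm X * specNorm Y ≤ x * y :=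
          mul_le_mul hx hy (specNorm_nonneg _) hx0
        exact mul_le_mul h1 hz (specNorm_nonneg _) (mul_nonneg hx0 hy0)

lemma sandwich_bound {n' p' q' : ℕ} (σ : ℝ) (M M' : Matrix (Fin n') (Fin p') ℝ)
    (N N' : Matrix (Fin n') (Fin q') ℝ) (X : Matrix (Fin n') (Fin n') ℝ) :
    specNorm (Mᵀ * X * N + σ ^ 2 • (M'ᵀ * X * N'))
      ≤ (specNorm M * specNorm N + σ ^ 2 * specNorm M' * specNorm N') * specNorm X := by
  have h1 : specNorm (Mᵀ * X * N) ≤ specNorm M * specNorm X * specNorm N := by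
    have := specNorm_mul3_le Mᵀ X N (le_of_eq (specNorm_transpose M)) le_rfl le_rfl
      (specNorm_nonneg M) (specNorm_nonneg X) (specNorm_nonneg N)
    exact this
  have h2 : specNorm (M'ᵀ * X * N') ≤ specNorm M' * specNorm X * specNorm N' :=
    specNorm_mul3_le M'ᵀ X N' (le_of_eq (specNorm_transpose M')) le_rfl le_rfl
      (specNorm_nonneg M') (specNorm_nonneg X) (specNorm_nonneg N')
  have h3 : specNorm (σ ^ 2 • (M'ᵀ * X * N')) ≤ σ ^ 2 * (specNorm M' * specNorm X * specNorm N') := by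
    calc specNorm (σ ^ 2 • (M'ᵀ * X * N')) ≤ |σ ^ 2| * specNorm (M'ᵀ * X * N') :=
          specNorm_smul_le _ _
      _ = σ ^ 2 * specNorm (M'ᵀ * X * N') := by rw [abs_of_nonneg (sq_nonneg σ)]
      _ ≤ σ ^ 2 * (specNorm M' * specNorm X * specNorm N') :=
          mul_le_mul_of_nonneg_left h2 (sq_nonneg σ)
  calc specNorm (Mᵀ * X * N + σ ^ 2 • (M'ᵀ * X * N'))
      ≤ specNorm (Mᵀ * X * N) + specNorm (σ ^ 2 • (M'ᵀ * X * N')) := specNorm_add_le _ _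
    _ ≤ specNorm M * specNorm X * specNorm N
        + σ ^ 2 * (specNorm M' * specNorm X * specNorm N') := add_le_add h1 h3
    _ = (specNorm M * specNorm N + σ ^ 2 * specNorm M' * specNorm N') * specNorm X := by ring


lemma psd_quad_nonneg {P : Matrix (Fin p) (Fin p) ℝ} (h : P.PosSemidef) (x : Fin p → ℝ) :
    0 ≤ x ⬝ᵥ P *ᵥ x := by simpa using h.dotProduct_mulVec_nonneg x

lemma slice_quad_ge {P : Matrix (Fin p) (Fin p) ℝ} {a : ℝ}
    (hP : (P - a • (1 : Matrix (Fin p) (Fin p) ℝ)).PosSemidef) (x : Fin p → ℝ) :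
    a * (x ⬝ᵥ x) ≤ x ⬝ᵥ P *ᵥ x := by
  have h := psd_quad_nonneg hP x
  have he : (P - a • (1 : Matrix (Fin p) (Fin p) ℝ)) *ᵥ x = P *ᵥ x - a • x := by
    rw [sub_mulVec, smul_mulVec, one_mulVec]
  rw [he, dotProduct_sub, dotProduct_smul, smul_eq_mul] at h
  linarith

lemma slice_psd {P : Matrix (Fin p) (Fin p) ℝ} {a : ℝ} (ha : 0 < a) (hsym : P.IsSymm)
    (hP : (P - a • (1 : Matrix (Fin p) (Fin p) ℝ)).PosSemidef) : P.PosSemidef := by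
  refine PosSemidef.of_dotProduct_mulVec_nonneg ?_ ?_
  · rw [IsHermitian, conjTranspose_eq_transpose_of_trivial]; exact hsym
  · intro x
    simp only [star_trivial]
    have h1 := slice_quad_ge hP x
    have h2 := mul_nonneg ha.le (dot_self_nonneg x)
    linarith

lemma trace_eq_frob {S : Matrix (Fin p) (Fin p) ℝ} (hS : Sᵀ = S) :
    (S * S).trace = ∑ i, ∑ j, S i j ^ 2 := by
  calc (S * S).trace = ∑ i, ∑ j, S i j * S j i := by
        simp [Matrix.trace, Matrix.diag, Matrix.mul_apply]
    _ = ∑ i, ∑ j, S i j ^ 2 := by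
        refine Finset.sum_congr rfl fun i _ => Finset.sum_congr rfl fun j _ => ?_
        have h := congrFun (congrFun hS i) j
        rw [transpose_apply] at h
        rw [h, sq]

lemma specNorm_psd_le_trace {P : Matrix (Fin p) (Fin p) ℝ} (hP : P.PosSemidef) :
    specNorm P ≤ P.trace := by
  open scoped MatrixOrder in
  obtain ⟨S, hSS, hSsym⟩ : ∃ S : Matrix (Fin p) (Fin p) ℝ, S * S = P ∧ Sᵀ = S :=
    ⟨CFC.sqrt P, CFC.sqrt_mul_sqrt_self P hP.nonneg, by
      have h := (CFC.sqrt_nonneg P).posSemidef.1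
      rwa [Matrix.IsHermitian, conjTranspose_eq_transpose_of_trivial] at h⟩
  have hF0 : (0:ℝ) ≤ ∑ i, ∑ j, S i j ^ 2 :=
    Finset.sum_nonneg fun i _ => Finset.sum_nonneg fun j _ => sq_nonneg _
  have h1 : specNorm P ≤ Real.sqrt (∑ i, ∑ j, S i j ^ 2) * Real.sqrt (∑ i, ∑ j, S i j ^ 2) := by
    rw [← hSS]
    calc specNorm (S * S) ≤ specNorm S * specNorm S := specNorm_mul_le _ _
      _ ≤ _ := mul_le_mul (specNorm_le_sqrt_frob S) (specNorm_le_sqrt_frob S)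
          (specNorm_nonneg S) (Real.sqrt_nonneg _)
  rw [Real.mul_self_sqrt hF0] at h1
  have h2 : P.trace = ∑ i, ∑ j, S i j ^ 2 := by rw [← hSS]; exact trace_eq_frob hSsym
  rw [h2]; exact h1

lemma lamMin_pos {P : Matrix (Fin p) (Fin p) ℝ} (hp : 0 < p) (hP : P.PosDef) :
    0 < lamMin P := by
  have hcont : Continuous fun x : Fin p → ℝ => x ⬝ᵥ P *ᵥ x := by
    have he : (fun x : Fin p → ℝ => x ⬝ᵥ P *ᵥ x)
        = fun x => ∑ i, x i * ∑ j, P i j * x j := by funext x; rfl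
    rw [he]
    exact continuous_finset_sum _ fun i _ => (continuous_apply i).mul
      (continuous_finset_sum _ fun j _ => continuous_const.mul (continuous_apply j))
  have hdcont : Continuous fun x : Fin p → ℝ => x ⬝ᵥ x := by
    have he : (fun x : Fin p → ℝ => x ⬝ᵥ x) = fun x => ∑ i, x i * x i := by funext x; rfl
    rw [he]
    exact continuous_finset_sum _ fun i _ => (continuous_apply i).mul (continuous_apply i)
  set K := {x : Fin p → ℝ | x ⬝ᵥ x = 1} with hK
  have hKc : IsClosed K := isClosed_eq hdcont continuous_const
  have hKb : K ⊆ Metric.closedBall 0 1 := by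
    intro x hx
    rw [Metric.mem_closedBall, dist_zero_right]
    rw [pi_norm_le_iff_of_nonneg zero_le_one]
    intro i
    rw [Real.norm_eq_abs, abs_le_one_iff_mul_self_le_one]
    have h5 : x i * x i ≤ ∑ j, x j * x j := Finset.single_le_sum (f := fun j => x j * x j)
      (fun j _ => mul_self_nonneg _) (Finset.mem_univ i)
    have hx1 : ∑ j, x j * x j = 1 := hx
    linarith
  have hKcomp : IsCompact K := (isCompact_closedBall (0 : Fin p → ℝ) 1).of_isClosed_subset hKc hKb
  have hne : K.Nonempty := by
    refine ⟨Pi.single (⟨0, hp⟩ : Fin p) (1:ℝ), ?_⟩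
    simp [hK, dotProduct, Pi.single_apply, ite_mul, Finset.sum_ite_eq']
  obtain ⟨x0, hx0K, hmin⟩ := hKcomp.exists_isMinOn hne hcont.continuousOn
  haveI : Nonempty {x : Fin p → ℝ // x ⬝ᵥ x = 1} := ⟨⟨x0, hx0K⟩⟩
  have hx0ne : x0 ≠ 0 := by
    intro h
    rw [hK] at hx0K
    simp only [Set.mem_setOf_eq, h] at hx0K
    simp [dotProduct] at hx0K
  have hpos : 0 < x0 ⬝ᵥ P *ᵥ x0 := by simpa using hP.dotProduct_mulVec_pos hx0ne
  have hge : x0 ⬝ᵥ P *ᵥ x0 ≤ lamMin P :=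
    le_ciInf fun y => (isMinOn_iff.mp hmin) y.1 y.2
  linarith

lemma specNorm_inv_le {R : Matrix (Fin q) (Fin q) ℝ} {r : ℝ} (hr : 0 < r)
    (hq : ∀ v : Fin q → ℝ, r * (v ⬝ᵥ v) ≤ v ⬝ᵥ R *ᵥ v) (hdet : IsUnit R.det) :
    specNorm R⁻¹ ≤ 1 / r := by
  apply specNorm_le (by positivity)
  intro x hx
  set y := R⁻¹ *ᵥ x with hy
  have hRy : R *ᵥ y = x := by
    rw [hy, mulVec_mulVec, mul_nonsing_inv _ hdet, one_mulVec]
  have h1 : r * (y ⬝ᵥ y) ≤ y ⬝ᵥ x := by rw [← hRy]; exact hq y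
  have h2 : y ⬝ᵥ x ≤ enorm y := by
    have := dot_le_enorm y x
    rwa [enorm_unit hx, mul_one] at this
  have h3 := enorm_sq y
  have h4 := enorm_nonneg y
  by_cases h0 : enorm y = 0
  · rw [h0]; positivity
  · have hpos : 0 < enorm y := lt_of_le_of_ne h4 (Ne.symm h0)
    rw [← h3] at h1
    have h5 : r * enorm y ^ 2 ≤ enorm y := h1.trans h2
    have h6 : r * enorm y ≤ 1 := by nlinarith [mul_pos hr hpos]
    rw [le_div_iff₀ hr]
    linarith


lemma conj_quad {n' m' : ℕ} (X : Matrix (Fin n') (Fin m') ℝ) (P : Matrix (Fin n') (Fin n') ℝ)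
    (v : Fin m' → ℝ) :
    v ⬝ᵥ (Xᵀ * P * X) *ᵥ v = (X *ᵥ v) ⬝ᵥ P *ᵥ (X *ᵥ v) := by
  rw [← Matrix.mulVec_mulVec, ← Matrix.mulVec_mulVec, dotProduct_mulVec, vecMul_transpose]

end PhiToolkit

/-- Lipschitz continuity of `Φ` on the interior slice `S_a`:
`‖Φ(P) − Φ(Q)‖ ≤ L_Φ(a)·‖P − Q‖`, and `‖Φ(P)‖ ≤ C_Φ(a)` on `S_a`. -/
theorem phi_lipschitz {n m : ℕ} (hn : 0 < n) (hm : 0 < m)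
    (σ : ℝ) (hσ : 0 < σ)
    (A Abar : Matrix (Fin n) (Fin n) ℝ) (B Bbar : Matrix (Fin n) (Fin m) ℝ)
    (hR0 : (Bᵀ * B + σ ^ 2 • (Bbarᵀ * Bbar)).PosDef)
    (a : ℝ) (ha : 0 < a) :
    (∀ P Q : Matrix (Fin n) (Fin n) ℝ, P ∈ Slice a → Q ∈ Slice a →
      specNorm (Phi σ A Abar B Bbar P - Phi σ A Abar B Bbar Q)
        ≤ LPhi σ A Abar B Bbar a * specNorm (P - Q)) ∧
    (∀ P : Matrix (Fin n) (Fin n) ℝ, P ∈ Slice a →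
      specNorm (Phi σ A Abar B Bbar P) ≤ CPhi σ A Abar B Bbar a) := by
  have hαS : 0 ≤ alphaS σ A Abar B Bbar :=
    add_nonneg (mul_nonneg (specNorm_nonneg A) (specNorm_nonneg B))
      (mul_nonneg (mul_nonneg (sq_nonneg σ) (specNorm_nonneg Abar)) (specNorm_nonneg Bbar))
  have hαA : 0 ≤ alphaA σ A Abar :=
    add_nonneg (sq_nonneg _) (mul_nonneg (sq_nonneg σ) (sq_nonneg _))
  have hαR : 0 ≤ alphaR σ B Bbar :=
    add_nonneg (sq_nonneg _) (mul_nonneg (sq_nonneg σ) (sq_nonneg _))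
  have hr0 : 0 < lamMin (Bᵀ * B + σ ^ 2 • (Bbarᵀ * Bbar)) := lamMin_pos hm hR0
  have har0 : 0 < a * lamMin (Bᵀ * B + σ ^ 2 • (Bbarᵀ * Bbar)) := mul_pos ha hr0
  have hc : 0 ≤ cR σ B Bbar a := by
    unfold cR; positivity
  have hcval : cR σ B Bbar a = 1 / (a * lamMin (Bᵀ * B + σ ^ 2 • (Bbarᵀ * Bbar))) := rfl
  -- facts valid on the slice
  have key : ∀ P : Matrix (Fin n) (Fin n) ℝ, P ∈ Slice a →
      specNorm P ≤ 1 ∧ IsUnit (Rop σ B Bbar P).det ∧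
      specNorm (Rop σ B Bbar P)⁻¹ ≤ cR σ B Bbar a ∧
      specNorm (Sop σ A Abar B Bbar P) ≤ alphaS σ A Abar B Bbar := by
    intro P hP
    obtain ⟨hsym, hpsd, htr⟩ := hP
    have hP1 : specNorm P ≤ 1 := by
      have h := specNorm_psd_le_trace (slice_psd ha hsym hpsd)
      rwa [htr] at h
    have e1 : ∀ v : Fin m → ℝ, v ⬝ᵥ (Rop σ B Bbar P) *ᵥ v
        = (B *ᵥ v) ⬝ᵥ P *ᵥ (B *ᵥ v) + σ ^ 2 * ((Bbar *ᵥ v) ⬝ᵥ P *ᵥ (Bbar *ᵥ v)) := by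
      intro v
      unfold Rop
      rw [add_mulVec, dotProduct_add, smul_mulVec, dotProduct_smul, smul_eq_mul,
        conj_quad, conj_quad]
    have e2 : ∀ v : Fin m → ℝ, v ⬝ᵥ (Bᵀ * B + σ ^ 2 • (Bbarᵀ * Bbar)) *ᵥ v
        = (B *ᵥ v) ⬝ᵥ (B *ᵥ v) + σ ^ 2 * ((Bbar *ᵥ v) ⬝ᵥ (Bbar *ᵥ v)) := by
      intro v
      rw [add_mulVec, dotProduct_add, smul_mulVec, dotProduct_smul, smul_eq_mul,
        quad_transpose_mul, quad_transpose_mul]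
    have hquad : ∀ v : Fin m → ℝ,
        (a * lamMin (Bᵀ * B + σ ^ 2 • (Bbarᵀ * Bbar))) * (v ⬝ᵥ v)
          ≤ v ⬝ᵥ (Rop σ B Bbar P) *ᵥ v := by
      intro v
      have g1 : a * ((B *ᵥ v) ⬝ᵥ (B *ᵥ v)) ≤ (B *ᵥ v) ⬝ᵥ P *ᵥ (B *ᵥ v) :=
        slice_quad_ge hpsd (B *ᵥ v)
      have g2 : a * ((Bbar *ᵥ v) ⬝ᵥ (Bbar *ᵥ v)) ≤ (Bbar *ᵥ v) ⬝ᵥ P *ᵥ (Bbar *ᵥ v) :=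
        slice_quad_ge hpsd (Bbar *ᵥ v)
      have g3 := lamMin_mul_le_quad (Bᵀ * B + σ ^ 2 • (Bbarᵀ * Bbar)) v
      calc (a * lamMin (Bᵀ * B + σ ^ 2 • (Bbarᵀ * Bbar))) * (v ⬝ᵥ v)
          = a * (lamMin (Bᵀ * B + σ ^ 2 • (Bbarᵀ * Bbar)) * (v ⬝ᵥ v)) := by ring
        _ ≤ a * (v ⬝ᵥ (Bᵀ * B + σ ^ 2 • (Bbarᵀ * Bbar)) *ᵥ v) :=
            mul_le_mul_of_nonneg_left g3 ha.le
        _ = a * ((B *ᵥ v) ⬝ᵥ (B *ᵥ v)) + σ ^ 2 * (a * ((Bbar *ᵥ v) ⬝ᵥ (Bbar *ᵥ v))) := by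
            rw [e2]; ring
        _ ≤ (B *ᵥ v) ⬝ᵥ P *ᵥ (B *ᵥ v) + σ ^ 2 * ((Bbar *ᵥ v) ⬝ᵥ P *ᵥ (Bbar *ᵥ v)) :=
            add_le_add g1 (mul_le_mul_of_nonneg_left g2 (sq_nonneg σ))
        _ = v ⬝ᵥ (Rop σ B Bbar P) *ᵥ v := (e1 v).symm
    have hposdef : (Rop σ B Bbar P).PosDef := by
      refine PosDef.of_dotProduct_mulVec_pos ?_ ?_
      · rw [Matrix.IsHermitian, conjTranspose_eq_transpose_of_trivial]
        unfold Rop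
        have hPt : Pᵀ = P := hsym
        rw [transpose_add, transpose_smul, Matrix.transpose_mul, Matrix.transpose_mul,
          Matrix.transpose_mul, Matrix.transpose_mul, transpose_transpose,
          transpose_transpose, hPt, Matrix.mul_assoc, Matrix.mul_assoc]
      · intro x hx
        have hxx : 0 < x ⬝ᵥ x :=
          lt_of_le_of_ne (dot_self_nonneg x)
            (fun h => hx (dotProduct_self_eq_zero.mp h.symm))
        have h1 := hquad x
        have h2 := mul_pos har0 hxx
        simp only [star_trivial]
        linarith
    have hdet : IsUnit (Rop σ B Bbar P).det := hposdef.det_pos.ne'.isUnit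
    have hinv : specNorm (Rop σ B Bbar P)⁻¹ ≤ cR σ B Bbar a := by
      rw [hcval]
      exact specNorm_inv_le har0 hquad hdet
    have hS : specNorm (Sop σ A Abar B Bbar P) ≤ alphaS σ A Abar B Bbar := by
      have h : specNorm (Sop σ A Abar B Bbar P)
          ≤ alphaS σ A Abar B Bbar * specNorm P := by
        unfold Sop alphaS
        exact sandwich_bound σ A Abar B Bbar P
      calc specNorm (Sop σ A Abar B Bbar P) ≤ alphaS σ A Abar B Bbar * specNorm P := h
        _ ≤ alphaS σ A Abar B Bbar * 1 := mul_le_mul_of_nonneg_left hP1 hαS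
        _ = alphaS σ A Abar B Bbar := mul_one _
    exact ⟨hP1, hdet, hinv, hS⟩
  have hTbound : ∀ X : Matrix (Fin n) (Fin n) ℝ,
      specNorm (Aᵀ * X * A + σ ^ 2 • (Abarᵀ * X * Abar)) ≤ alphaA σ A Abar * specNorm X := by
    intro X
    have h := sandwich_bound σ A Abar A Abar X
    have he : specNorm A * specNorm A + σ ^ 2 * specNorm Abar * specNorm Abar
        = alphaA σ A Abar := by unfold alphaA; ring
    rwa [he] at h
  have hRbound : ∀ X : Matrix (Fin n) (Fin n) ℝ,
      specNorm (Rop σ B Bbar X) ≤ alphaR σ B Bbar * specNorm X := by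
    intro X
    have h := sandwich_bound σ B Bbar B Bbar X
    have he : specNorm B * specNorm B + σ ^ 2 * specNorm Bbar * specNorm Bbar
        = alphaR σ B Bbar := by unfold alphaR; ring
    rw [he] at h
    exact h
  have hSbound : ∀ X : Matrix (Fin n) (Fin n) ℝ,
      specNorm (Sop σ A Abar B Bbar X) ≤ alphaS σ A Abar B Bbar * specNorm X := by
    intro X
    unfold Sop alphaS
    exact sandwich_bound σ A Abar B Bbar X
  constructor
  · -- Lipschitz bound
    intro P Q hP hQ
    obtain ⟨hP1, hdetP, hinvP, hSP⟩ := key P hP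
    obtain ⟨hQ1, hdetQ, hinvQ, hSQ⟩ := key Q hQ
    have hSPT : specNorm (Sop σ A Abar B Bbar P)ᵀ ≤ alphaS σ A Abar B Bbar := by
      rw [specNorm_transpose]; exact hSP
    have hd0 : 0 ≤ specNorm (P - Q) := specNorm_nonneg _
    have hSlin : Sop σ A Abar B Bbar P - Sop σ A Abar B Bbar Q
        = Sop σ A Abar B Bbar (P - Q) := by
      unfold Sop
      simp only [Matrix.mul_sub, Matrix.sub_mul, smul_sub]
      abel
    have hRlin : Rop σ B Bbar P - Rop σ B Bbar Q = Rop σ B Bbar (P - Q) := by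
      unfold Rop
      simp only [Matrix.mul_sub, Matrix.sub_mul, smul_sub]
      abel
    have hSd : specNorm (Sop σ A Abar B Bbar P - Sop σ A Abar B Bbar Q)
        ≤ alphaS σ A Abar B Bbar * specNorm (P - Q) := by
      rw [hSlin]; exact hSbound _
    have hRd : specNorm (Rop σ B Bbar P - Rop σ B Bbar Q)
        ≤ alphaR σ B Bbar * specNorm (P - Q) := by
      rw [hRlin]; exact hRbound _
    have hinvdiff : (Rop σ B Bbar P)⁻¹ - (Rop σ B Bbar Q)⁻¹
        = -((Rop σ B Bbar P)⁻¹ * (Rop σ B Bbar P - Rop σ B Bbar Q) * (Rop σ B Bbar Q)⁻¹) := by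
      have h : (Rop σ B Bbar P)⁻¹ * (Rop σ B Bbar P - Rop σ B Bbar Q) * (Rop σ B Bbar Q)⁻¹
          = (Rop σ B Bbar Q)⁻¹ - (Rop σ B Bbar P)⁻¹ := by
        calc (Rop σ B Bbar P)⁻¹ * (Rop σ B Bbar P - Rop σ B Bbar Q) * (Rop σ B Bbar Q)⁻¹
            = (Rop σ B Bbar P)⁻¹ * Rop σ B Bbar P * (Rop σ B Bbar Q)⁻¹
              - (Rop σ B Bbar P)⁻¹ * (Rop σ B Bbar Q * (Rop σ B Bbar Q)⁻¹) := by
              noncomm_ring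
          _ = (Rop σ B Bbar Q)⁻¹ - (Rop σ B Bbar P)⁻¹ := by
              rw [Matrix.nonsing_inv_mul _ hdetP, Matrix.mul_nonsing_inv _ hdetQ,
                Matrix.one_mul, Matrix.mul_one]
      rw [h, neg_sub]
    have hmid : specNorm ((Rop σ B Bbar P)⁻¹ - (Rop σ B Bbar Q)⁻¹)
        ≤ cR σ B Bbar a * (alphaR σ B Bbar * specNorm (P - Q)) * cR σ B Bbar a := by
      rw [hinvdiff, specNorm_neg]
      exact specNorm_mul3_le _ _ _ hinvP hRd hinvQ hc
        (mul_nonneg hαR hd0) hc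
    have t1 : specNorm ((Sop σ A Abar B Bbar P - Sop σ A Abar B Bbar Q)
          * (Rop σ B Bbar P)⁻¹ * (Sop σ A Abar B Bbar P)ᵀ)
        ≤ (alphaS σ A Abar B Bbar * specNorm (P - Q)) * cR σ B Bbar a
            * alphaS σ A Abar B Bbar :=
      specNorm_mul3_le _ _ _ hSd hinvP hSPT (mul_nonneg hαS hd0) hc hαS
    have t2 : specNorm (Sop σ A Abar B Bbar Q
          * ((Rop σ B Bbar P)⁻¹ - (Rop σ B Bbar Q)⁻¹) * (Sop σ A Abar B Bbar P)ᵀ)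
        ≤ alphaS σ A Abar B Bbar
            * (cR σ B Bbar a * (alphaR σ B Bbar * specNorm (P - Q)) * cR σ B Bbar a)
            * alphaS σ A Abar B Bbar :=
      specNorm_mul3_le _ _ _ hSQ hmid hSPT hαS
        (mul_nonneg (mul_nonneg hc (mul_nonneg hαR hd0)) hc) hαS
    have hlast : specNorm ((Sop σ A Abar B Bbar P)ᵀ - (Sop σ A Abar B Bbar Q)ᵀ)
        ≤ alphaS σ A Abar B Bbar * specNorm (P - Q) := by
      rw [← Matrix.transpose_sub, specNorm_transpose]
      exact hSd
    have t3 : specNorm (Sop σ A Abar B Bbar Q * (Rop σ B Bbar Q)⁻¹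
          * ((Sop σ A Abar B Bbar P)ᵀ - (Sop σ A Abar B Bbar Q)ᵀ))
        ≤ alphaS σ A Abar B Bbar * cR σ B Bbar a
            * (alphaS σ A Abar B Bbar * specNorm (P - Q)) :=
      specNorm_mul3_le _ _ _ hSQ hinvQ hlast hαS hc (mul_nonneg hαS hd0)
    have hmain : Phi σ A Abar B Bbar P - Phi σ A Abar B Bbar Q
        = (Aᵀ * (P - Q) * A + σ ^ 2 • (Abarᵀ * (P - Q) * Abar))
          - ((Sop σ A Abar B Bbar P - Sop σ A Abar B Bbar Q)
              * (Rop σ B Bbar P)⁻¹ * (Sop σ A Abar B Bbar P)ᵀ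
            + Sop σ A Abar B Bbar Q * ((Rop σ B Bbar P)⁻¹ - (Rop σ B Bbar Q)⁻¹)
              * (Sop σ A Abar B Bbar P)ᵀ
            + Sop σ A Abar B Bbar Q * (Rop σ B Bbar Q)⁻¹
              * ((Sop σ A Abar B Bbar P)ᵀ - (Sop σ A Abar B Bbar Q)ᵀ)) := by
      simp only [Phi, Matrix.mul_sub, Matrix.sub_mul, smul_sub]
      abel
    calc specNorm (Phi σ A Abar B Bbar P - Phi σ A Abar B Bbar Q)
        ≤ specNorm (Aᵀ * (P - Q) * A + σ ^ 2 • (Abarᵀ * (P - Q) * Abar))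
          + specNorm ((Sop σ A Abar B Bbar P - Sop σ A Abar B Bbar Q)
              * (Rop σ B Bbar P)⁻¹ * (Sop σ A Abar B Bbar P)ᵀ
            + Sop σ A Abar B Bbar Q * ((Rop σ B Bbar P)⁻¹ - (Rop σ B Bbar Q)⁻¹)
              * (Sop σ A Abar B Bbar P)ᵀ
            + Sop σ A Abar B Bbar Q * (Rop σ B Bbar Q)⁻¹
              * ((Sop σ A Abar B Bbar P)ᵀ - (Sop σ A Abar B Bbar Q)ᵀ)) := by
          rw [hmain]; exact specNorm_sub_le _ _
      _ ≤ alphaA σ A Abar * specNorm (P - Q)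
          + ((alphaS σ A Abar B Bbar * specNorm (P - Q)) * cR σ B Bbar a
              * alphaS σ A Abar B Bbar
            + alphaS σ A Abar B Bbar
              * (cR σ B Bbar a * (alphaR σ B Bbar * specNorm (P - Q)) * cR σ B Bbar a)
              * alphaS σ A Abar B Bbar
            + alphaS σ A Abar B Bbar * cR σ B Bbar a
              * (alphaS σ A Abar B Bbar * specNorm (P - Q))) := by
          refine add_le_add (hTbound _) ?_
          calc specNorm (_ + _ + _)
              ≤ specNorm (_ + _) + specNorm _ := specNorm_add_le _ _
            _ ≤ _ := by
                refine add_le_add ((specNorm_add_le _ _).trans (add_le_add t1 t2)) t3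
      _ = LPhi σ A Abar B Bbar a * specNorm (P - Q) := by
          unfold LPhi; ring
  · -- uniform bound
    intro P hP
    obtain ⟨hP1, hdetP, hinvP, hSP⟩ := key P hP
    have hSPT : specNorm (Sop σ A Abar B Bbar P)ᵀ ≤ alphaS σ A Abar B Bbar := by
      rw [specNorm_transpose]; exact hSP
    have hT : specNorm (Aᵀ * P * A + σ ^ 2 • (Abarᵀ * P * Abar)) ≤ alphaA σ A Abar := by
      calc specNorm (Aᵀ * P * A + σ ^ 2 • (Abarᵀ * P * Abar))
          ≤ alphaA σ A Abar * specNorm P := hTbound P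
        _ ≤ alphaA σ A Abar * 1 := mul_le_mul_of_nonneg_left hP1 hαA
        _ = alphaA σ A Abar := mul_one _
    have hq : specNorm (Sop σ A Abar B Bbar P * (Rop σ B Bbar P)⁻¹ * (Sop σ A Abar B Bbar P)ᵀ)
        ≤ alphaS σ A Abar B Bbar * cR σ B Bbar a * alphaS σ A Abar B Bbar :=
      specNorm_mul3_le _ _ _ hSP hinvP hSPT hαS hc hαS
    calc specNorm (Phi σ A Abar B Bbar P)
        ≤ specNorm (Aᵀ * P * A + σ ^ 2 • (Abarᵀ * P * Abar))
          + specNorm (Sop σ A Abar B Bbar P * (Rop σ B Bbar P)⁻¹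
              * (Sop σ A Abar B Bbar P)ᵀ) := by
          unfold Phi
          exact specNorm_sub_le _ _
      _ ≤ alphaA σ A Abar
          + alphaS σ A Abar B Bbar * cR σ B Bbar a * alphaS σ A Abar B Bbar :=
          add_le_add hT hq
      _ = CPhi σ A Abar B Bbar a := by
          unfold CPhi alphaA; ring

end SCS
end
end
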